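/- (Consensus-error and objective-error extraction) Let m ≥ 2, let J = (1/m) 1_m 1_mᵀ ∈ ℝ^{m×m}, let f : ℝ^{m×d} → ℝ be any function, let u, x* ∈ ℝ^{m×d}, let y* ∈ C^⊥ with y* ≠ 0, and let B̄ ∈ ℝ. Suppose (i) f(u) − f(x*) + ⟨y, u⟩ ≤ B̄ for every y ∈ C^⊥ with ‖y‖ = 2‖y*‖, and (ii) f(u) − f(x*) + ⟨y*, u⟩ ≥ 0. Then ‖(I − J)u‖ ≤ B̄/‖y*‖ and |f(u) − f(x*)| ≤ B̄. -/

import Mathlib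

/-- Frobenius inner product on real m×d matrices. -/
noncomputable def ip {m d : ℕ} (x y : Matrix (Fin m) (Fin d) ℝ) : ℝ :=
  ∑ i, ∑ j, x i j * y i j

/-- Frobenius norm. -/
noncomputable def nrm {m d : ℕ} (x : Matrix (Fin m) (Fin d) ℝ) : ℝ :=
  Real.sqrt (ip x x)

/-- The orthogonal complement C^⊥ = {y : 1ₘᵀ y = 0}. -/
def cPerp (m d : ℕ) : Set (Matrix (Fin m) (Fin d) ℝ) :=
  {y | ∀ j, ∑ i, y i j = 0}

/-- The averaging matrix J = (1/m) 1ₘ 1ₘᵀ. -/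
noncomputable def Jmat (m : ℕ) : Matrix (Fin m) (Fin m) ℝ :=
  fun _ _ => 1 / (m : ℝ)

lemma ip_self_nonneg {m d : ℕ} (x : Matrix (Fin m) (Fin d) ℝ) : 0 ≤ ip x x := by
  apply Finset.sum_nonneg; intro i _; apply Finset.sum_nonneg; intro j _; exact mul_self_nonneg _

lemma nrm_sq {m d : ℕ} (x : Matrix (Fin m) (Fin d) ℝ) : nrm x ^ 2 = ip x x := by
  rw [nrm, Real.sq_sqrt (ip_self_nonneg x)]

lemma ip_smul_left {m d : ℕ} (c : ℝ) (x y : Matrix (Fin m) (Fin d) ℝ) :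
    ip (c • x) y = c * ip x y := by
  simp [ip, Finset.mul_sum, Matrix.smul_apply, mul_assoc]

lemma ip_smul_self {m d : ℕ} (c : ℝ) (x : Matrix (Fin m) (Fin d) ℝ) :
    ip (c • x) (c • x) = c ^ 2 * ip x x := by
  simp only [ip, Finset.mul_sum, Matrix.smul_apply, smul_eq_mul]
  congr 1; ext i; congr 1; ext j; ring

lemma nrm_smul {m d : ℕ} (c : ℝ) (x : Matrix (Fin m) (Fin d) ℝ) :
    nrm (c • x) = |c| * nrm x := by
  rw [nrm, ip_smul_self, Real.sqrt_mul (sq_nonneg c), Real.sqrt_sq_eq_abs]; rfl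

lemma cauchy {m d : ℕ} (x y : Matrix (Fin m) (Fin d) ℝ) :
    ip x y ≤ nrm x * nrm y := by
  have h := Real.sum_mul_le_sqrt_mul_sqrt (Finset.univ : Finset (Fin m × Fin d))
    (fun p => x p.1 p.2) (fun p => y p.1 p.2)
  simpa [ip, nrm, Fintype.sum_prod_type, pow_two] using h

lemma nrm_pos {m d : ℕ} {x : Matrix (Fin m) (Fin d) ℝ} (hx : x ≠ 0) : 0 < nrm x := by
  rcases (Real.sqrt_nonneg (ip x x)).lt_or_eq with h | h
  · exact h
  · exfalso; apply hx
    have h0 : ip x x = 0 := by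
      have := Real.sqrt_eq_zero (ip_self_nonneg x) |>.mp h.symm
      exact this
    have hall := (Finset.sum_eq_zero_iff_of_nonneg (fun i _ =>
      Finset.sum_nonneg (fun j _ => mul_self_nonneg (x i j)))).mp h0
    ext i j
    have hrow := (Finset.sum_eq_zero_iff_of_nonneg (fun j _ =>
      mul_self_nonneg (x i j))).mp (hall i (Finset.mem_univ i)) j (Finset.mem_univ j)
    have := mul_self_eq_zero.mp hrow
    simpa using this

/-- consensus-error and objective-error extraction. -/
theorem stmt_14 {m d : ℕ} (hm : 2 ≤ m)
    (f : Matrix (Fin m) (Fin d) ℝ → ℝ)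
    (u xs ys : Matrix (Fin m) (Fin d) ℝ)
    (hys : ys ∈ cPerp m d) (hys0 : ys ≠ 0) (Bbar : ℝ)
    (h1 : ∀ y ∈ cPerp m d, nrm y = 2 * nrm ys → f u - f xs + ip y u ≤ Bbar)
    (h2 : 0 ≤ f u - f xs + ip ys u) :
    nrm (((1 : Matrix (Fin m) (Fin m) ℝ) - Jmat m) * u) ≤ Bbar / nrm ys ∧
      |f u - f xs| ≤ Bbar := by
  set F := f u - f xs with hF
  have hyp : 0 < nrm ys := nrm_pos hys0
  have hm0 : (m : ℝ) ≠ 0 := by positivity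
  -- w := (1 - J) u
  set w := ((1 : Matrix (Fin m) (Fin m) ℝ) - Jmat m) * u with hw
  have hwapp : ∀ i j, w i j = u i j - (1 / (m:ℝ)) * ∑ k, u k j := by
    intro i j
    simp [hw, Matrix.sub_mul, Matrix.mul_apply, Jmat, Matrix.sub_apply, Finset.mul_sum]
  -- w ∈ cPerp
  have hwperp : w ∈ cPerp m d := by
    intro j
    simp only [hwapp]
    rw [Finset.sum_sub_distrib, Finset.sum_const, Finset.card_univ, Fintype.card_fin]
    field_simp
    rw [nsmul_eq_mul, mul_div_assoc', mul_div_cancel_left₀ _ hm0, sub_self]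
  -- for y ∈ cPerp, ip y u = ip y w
  have key : ∀ y ∈ cPerp m d, ip y u = ip y w := by
    intro y hy
    simp only [ip, hwapp, mul_sub]
    rw [← sub_eq_zero, ← Finset.sum_sub_distrib]
    simp only [← Finset.sum_sub_distrib, sub_sub_cancel_left]
    rw [Finset.sum_comm]
    apply Finset.sum_eq_zero
    intro j _
    simp only [sub_sub_cancel]
    rw [← Finset.sum_mul, hy j, zero_mul]
  -- the ±2 ys directions
  have h2mem : ∀ c : ℝ, (c • ys) ∈ cPerp m d := by
    intro c j
    have := hys j
    simp [Matrix.smul_apply, ← Finset.mul_sum, this]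
  have hnrm2 : nrm ((2:ℝ) • ys) = 2 * nrm ys := by
    rw [nrm_smul]; norm_num
  have hnrmneg2 : nrm ((-2:ℝ) • ys) = 2 * nrm ys := by
    rw [nrm_smul]; norm_num
  have hA := h1 _ (h2mem 2) hnrm2
  have hB := h1 _ (h2mem (-2)) hnrmneg2
  rw [ip_smul_left] at hA hB
  -- |F| ≤ Bbar
  have habs : |F| ≤ Bbar := by
    rw [abs_le]; constructor <;> linarith
  have hB0 : 0 ≤ Bbar := by
    have := abs_nonneg F; linarith
  refine ⟨?_, habs⟩
  -- consensus bound
  by_cases hw0 : w = 0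
  · rw [hw0]
    have : nrm (0 : Matrix (Fin m) (Fin d) ℝ) = 0 := by
      simp [nrm, ip]
    rw [this]
    positivity
  · have hwpos : 0 < nrm w := nrm_pos hw0
    set c : ℝ := 2 * nrm ys / nrm w with hc
    have hcpos : 0 < c := by positivity
    have hcnrm : nrm (c • w) = 2 * nrm ys := by
      rw [nrm_smul, abs_of_pos hcpos, hc]
      field_simp
    have hcw : (c • w) ∈ cPerp m d := by
      intro j
      simp [Matrix.smul_apply, ← Finset.mul_sum, hwperp j]
    have hC := h1 _ hcw hcnrm
    rw [ip_smul_left] at hC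
    have hwu : ip w u = nrm w ^ 2 := by rw [key w hwperp, nrm_sq]
    have hCS : ip ys u ≤ nrm ys * nrm w := by
      rw [key ys hys]; exact cauchy ys w
    have hmain : nrm ys * nrm w ≤ Bbar := by
      have hc2 : c * ip w u = 2 * nrm ys * nrm w := by
        rw [hwu, hc]; field_simp
      nlinarith [hwpos, hyp]
    rw [le_div_iff₀ hyp]
    linarith [hmain]
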